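/- For every δ > 0 there exists N such that for all n ≥ N, the number of degenerate non-trivial hyperplanes of ℝ^n is at most 2^{δn}. (That is, the number of degenerate non-trivial hyperplanes is N^{o(1)}, where N = 2^n.) -/

import Mathlib

/-- A hyperplane of `ℝ^n` is non-trivial if it is spanned by its intersection with
`{-1,1}^n`. -/
def IsNonTrivialHyperplane (n : ℕ) (V : Submodule ℝ (EuclideanSpace ℝ (Fin n))) : Prop :=
  Module.finrank ℝ V = n - 1 ∧
    V = Submodule.span ℝ {x : EuclideanSpace ℝ (Fin n) | x ∈ V ∧ ∀ i, x i = 1 ∨ x i = -1}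

/-- A hyperplane of `ℝ^n` is degenerate if some nonzero normal vector has at most
`log log n` non-zero coordinates. -/
def IsDegenerateHyperplane (n : ℕ) (V : Submodule ℝ (EuclideanSpace ℝ (Fin n))) : Prop :=
  ∃ v : EuclideanSpace ℝ (Fin n), v ≠ 0 ∧ v ∈ Vᗮ ∧
    (Nat.card {i : Fin n // v i ≠ 0} : ℝ) ≤ Real.log (Real.log n)

section Aux

open Module

/-- A hyperplane with nonzero normal vector `v` is exactly the kernel of `x ↦ ∑ vᵢxᵢ`. -/
lemma aux_mem_iff_sum {n : ℕ} {V : Submodule ℝ (EuclideanSpace ℝ (Fin n))}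
    (hV : Module.finrank ℝ V = n - 1) {v : EuclideanSpace ℝ (Fin n)} (hv0 : v ≠ 0)
    (hv : v ∈ Vᗮ) : ∀ x, x ∈ V ↔ ∑ i, v i * x i = 0 := by
  have hfr : finrank ℝ (EuclideanSpace ℝ (Fin n)) = n := finrank_euclideanSpace_fin
  have h1 : finrank ℝ (ℝ ∙ v) = 1 := finrank_span_singleton hv0
  have h2 : finrank ℝ (ℝ ∙ v) + finrank ℝ (ℝ ∙ v)ᗮ = n := by
    rw [Submodule.finrank_add_finrank_orthogonal, hfr]
  have h3 : finrank ℝ (ℝ ∙ v)ᗮ = n - 1 := by omega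
  have hle : V ≤ (ℝ ∙ v)ᗮ := by
    intro x hx
    rw [Submodule.mem_orthogonal_singleton_iff_inner_right]
    have := hv x hx
    rwa [real_inner_comm] at this
  have heq : V = (ℝ ∙ v)ᗮ := Submodule.eq_of_le_of_finrank_eq hle (by rw [hV, h3])
  intro x
  rw [heq, Submodule.mem_orthogonal_singleton_iff_inner_right]
  simp [PiLp.inner_apply, RCLike.inner_apply, mul_comm]

/-- Encoding of a degenerate hyperplane with normal-support `T` (equipped with an
embedding `e : T ↪ Fin k`) as a pair: an enumeration of `T` and the indicator of
which sign patterns on `T` extend to cube points of `V`. -/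
noncomputable def hypEncode {n k : ℕ} (T : Finset (Fin n)) (e : {i // i ∈ T} ↪ Fin k)
    (V : Submodule ℝ (EuclideanSpace ℝ (Fin n))) :
    (Fin k → Option (Fin n)) × ((Fin k → Bool) → Bool) :=
  ⟨fun j => if h : ∃ i : {i // i ∈ T}, e i = j then some (h.choose : Fin n) else none,
   fun c => @decide
     ((WithLp.toLp 2 (fun i => if h : i ∈ T then (if c (e ⟨i, h⟩) then (1:ℝ) else -1) else 1) :
        EuclideanSpace ℝ (Fin n)) ∈ V) (Classical.propDecidable _)⟩

lemma hypEncode_fst_eq_some {n k : ℕ} (T : Finset (Fin n)) (e : {i // i ∈ T} ↪ Fin k)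
    (V : Submodule ℝ (EuclideanSpace ℝ (Fin n))) (j : Fin k) (i : Fin n) :
    (hypEncode T e V).1 j = some i ↔ ∃ h : i ∈ T, e ⟨i, h⟩ = j := by
  unfold hypEncode
  simp only
  split
  next h =>
    simp only [Option.some.injEq]
    constructor
    · rintro rfl
      exact ⟨h.choose.2, h.choose_spec⟩
    · rintro ⟨hi, hj⟩
      have : h.choose = ⟨i, hi⟩ := e.injective (h.choose_spec.trans hj.symm)
      rw [this]
  next h =>
    simp only [reduceCtorEq, false_iff]
    rintro ⟨hi, hj⟩
    exact h ⟨⟨i, hi⟩, hj⟩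

lemma hypEncode_snd {n k : ℕ} (T : Finset (Fin n)) (e : {i // i ∈ T} ↪ Fin k)
    (V : Submodule ℝ (EuclideanSpace ℝ (Fin n))) (c : Fin k → Bool) :
    (hypEncode T e V).2 c = true ↔
      ((WithLp.toLp 2 (fun i => if h : i ∈ T then (if c (e ⟨i, h⟩) then (1:ℝ) else -1) else 1) :
        EuclideanSpace ℝ (Fin n)) ∈ V) := by
  unfold hypEncode
  simp only
  exact @decide_eq_true_iff _ (Classical.propDecidable _)

lemma hypEncode_inj {n k : ℕ}
    {V W : Submodule ℝ (EuclideanSpace ℝ (Fin n))}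
    (hVspan : V = Submodule.span ℝ {x : EuclideanSpace ℝ (Fin n) | x ∈ V ∧ ∀ i, x i = 1 ∨ x i = -1})
    (hWspan : W = Submodule.span ℝ {x : EuclideanSpace ℝ (Fin n) | x ∈ W ∧ ∀ i, x i = 1 ∨ x i = -1})
    {v w : EuclideanSpace ℝ (Fin n)}
    (hVv : ∀ x, x ∈ V ↔ ∑ i, v i * x i = 0)
    (hWw : ∀ x, x ∈ W ↔ ∑ i, w i * x i = 0)
    {TV TW : Finset (Fin n)}
    (hTV : ∀ i, i ∈ TV ↔ v i ≠ 0) (hTW : ∀ i, i ∈ TW ↔ w i ≠ 0)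
    (eV : {i // i ∈ TV} ↪ Fin k) (eW : {i // i ∈ TW} ↪ Fin k)
    (h : hypEncode TV eV V = hypEncode TW eW W) : V = W := by
  classical
  have h1 : (hypEncode TV eV V).1 = (hypEncode TW eW W).1 := by rw [h]
  have h2 : (hypEncode TV eV V).2 = (hypEncode TW eW W).2 := by rw [h]
  -- Step A : TV = TW
  have hT : TW = TV := by
    ext i
    constructor
    · intro hi
      have : (hypEncode TW eW W).1 (eW ⟨i, hi⟩) = some i :=
        (hypEncode_fst_eq_some _ _ _ _ _).mpr ⟨hi, rfl⟩
      rw [← h1] at this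
      obtain ⟨hi', _⟩ := (hypEncode_fst_eq_some _ _ _ _ _).mp this
      exact hi'
    · intro hi
      have : (hypEncode TV eV V).1 (eV ⟨i, hi⟩) = some i :=
        (hypEncode_fst_eq_some _ _ _ _ _).mpr ⟨hi, rfl⟩
      rw [h1] at this
      obtain ⟨hi', _⟩ := (hypEncode_fst_eq_some _ _ _ _ _).mp this
      exact hi'
  subst hT
  -- Step B : the embeddings agree
  have hee : ∀ (i : Fin n) (hi : i ∈ TW), eV ⟨i, hi⟩ = eW ⟨i, hi⟩ := by
    intro i hi
    have h3 : (hypEncode TW eW W).1 (eW ⟨i, hi⟩) = some i :=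
      (hypEncode_fst_eq_some _ _ _ _ _).mpr ⟨hi, rfl⟩
    rw [← h1] at h3
    obtain ⟨hi', hj⟩ := (hypEncode_fst_eq_some _ _ _ _ _).mp h3
    exact hj
  -- Step C : same cube points
  have hcube : ∀ x : EuclideanSpace ℝ (Fin n), (∀ i, x i = 1 ∨ x i = -1) →
      (x ∈ V ↔ x ∈ W) := by
    intro x hx
    set c : Fin k → Bool := fun j =>
      if h : ∃ i : {i // i ∈ TW}, eV i = j then (if x (h.choose : Fin n) = 1 then true else false)
      else false with hc
    set xc : EuclideanSpace ℝ (Fin n) :=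
      WithLp.toLp 2 (fun i => if h : i ∈ TW then (if c (eV ⟨i, h⟩) then (1:ℝ) else -1) else 1) with hxc
    have key1 : ∀ i, i ∈ TW → xc i = x i := by
      intro i hi
      have hex : ∃ i' : {i // i ∈ TW}, eV i' = eV ⟨i, hi⟩ := ⟨⟨i, hi⟩, rfl⟩
      have hch : hex.choose = ⟨i, hi⟩ := eV.injective hex.choose_spec
      have hcval : c (eV ⟨i, hi⟩) = (if x i = 1 then true else false) := by
        rw [hc]
        simp only []
        rw [dif_pos hex, hch]
      rw [hxc]
      simp only [PiLp.toLp_apply, dif_pos hi, hcval]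
      rcases hx i with h' | h' <;> norm_num [h']
    have key1' : ∀ (u : EuclideanSpace ℝ (Fin n)),
        (∀ i, u i ≠ 0 → i ∈ TW) → ∑ i, u i * xc i = ∑ i, u i * x i := by
      intro u hu
      refine Finset.sum_congr rfl fun i _ => ?_
      by_cases hi : i ∈ TW
      · rw [key1 i hi]
      · have : u i = 0 := by by_contra h'; exact hi (hu i h')
        rw [this, zero_mul, zero_mul]
    have hxcV : xc ∈ V ↔ x ∈ V := by
      rw [hVv, hVv, key1' v (fun i hvi => (hTV i).mpr hvi)]
    have hxcW : xc ∈ W ↔ x ∈ W := by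
      rw [hWw, hWw, key1' w (fun i hwi => (hTW i).mpr hwi)]
    have hgV : (hypEncode TW eV V).2 c = true ↔ xc ∈ V := hypEncode_snd _ _ _ _
    have hgW : (hypEncode TW eW W).2 c = true ↔ xc ∈ W := by
      have h4 := hypEncode_snd TW eW W c
      rw [h4]
      have h5 : (WithLp.toLp 2 (fun i => if h : i ∈ TW then (if c (eW ⟨i, h⟩) then (1:ℝ) else -1) else 1) :
          EuclideanSpace ℝ (Fin n)) = xc := by
        rw [hxc]
        congr 1
        funext i
        by_cases hi : i ∈ TW
        · simp only [dif_pos hi, hee i hi]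
        · simp only [dif_neg hi]
      rw [h5]
    rw [← hxcV, ← hgV, h2, hgW, hxcW]
  -- Step D : conclude via the spanning property
  rw [hVspan, hWspan]
  congr 1
  ext x
  simp only [Set.mem_setOf_eq]
  constructor
  · rintro ⟨h1, h2⟩; exact ⟨(hcube x h2).mp h1, h2⟩
  · rintro ⟨h1, h2⟩; exact ⟨(hcube x h2).mpr h1, h2⟩

open Real Filter in
lemma aux_count_bound (δ : ℝ) (hδ : 0 < δ) :
    ∀ᶠ n : ℕ in atTop,
      ((n + 1 : ℝ) ^ (⌊Real.log (Real.log n)⌋₊) *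
        2 ^ (2 ^ ⌊Real.log (Real.log n)⌋₊) : ℝ) ≤ (2 : ℝ) ^ (δ * n) := by
  have hl2 : (0:ℝ) < Real.log 2 := Real.log_pos one_lt_two
  have hl2' : Real.log 2 < 1 := by
    have := Real.log_two_lt_d9; linarith
  set ε := δ * Real.log 2 / 8 with hε
  have hε0 : 0 < ε := by positivity
  have htend : Tendsto (fun n : ℕ => (Real.log n) ^ 2 / (n : ℝ)) atTop (nhds 0) := by
    have h := Real.tendsto_pow_log_div_mul_add_atTop 1 0 2 one_ne_zero
    simp only [one_mul, add_zero] at h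
    exact h.comp tendsto_natCast_atTop_atTop
  filter_upwards [htend.eventually_lt_const hε0, eventually_ge_atTop 3] with n hsmall hn3
  set k := ⌊Real.log (Real.log n)⌋₊ with hk
  have hn0 : (0:ℝ) < n := by
    have : (3:ℝ) ≤ n := by exact_mod_cast hn3
    linarith
  have hn3' : (3:ℝ) ≤ n := by exact_mod_cast hn3
  have hL1 : 1 ≤ Real.log n := by
    rw [Real.le_log_iff_exp_le hn0]
    have := Real.exp_one_lt_d9
    linarith
  have hL0 : 0 < Real.log n := by linarith
  have hLL0 : 0 ≤ Real.log (Real.log n) := Real.log_nonneg hL1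
  have hkle : (k:ℝ) ≤ Real.log (Real.log n) := Nat.floor_le hLL0
  have hn1 : (0:ℝ) < (n:ℝ) + 1 := by linarith
  have hlog1 : 1 ≤ Real.log ((n:ℝ) + 1) := by
    calc (1:ℝ) ≤ Real.log n := hL1
    _ ≤ Real.log ((n:ℝ)+1) := Real.log_le_log (by linarith) (by linarith)
  -- bound A : (n+1)^k ≤ exp (loglog n * log (n+1))
  have heA : ((n:ℝ) + 1) ^ k = Real.exp ((k : ℝ) * Real.log ((n:ℝ)+1)) := by
    rw [Real.exp_nat_mul, Real.exp_log hn1]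
  have hA : ((n:ℝ) + 1) ^ k ≤ Real.exp (Real.log (Real.log n) * Real.log ((n:ℝ)+1)) := by
    rw [heA]
    apply Real.exp_le_exp.mpr
    apply mul_le_mul_of_nonneg_right hkle (by linarith)
  -- bound B : 2^(2^k) ≤ exp (log n)
  have h2k : ((2:ℝ) ^ k) ≤ Real.log n := by
    have : ((2:ℝ) ^ k) = Real.exp ((k:ℝ) * Real.log 2) := by
      rw [Real.exp_nat_mul, Real.exp_log two_pos]
    rw [this, ← Real.exp_log hL0]
    apply Real.exp_le_exp.mpr
    calc (k:ℝ) * Real.log 2 ≤ Real.log (Real.log n) * 1 :=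
      mul_le_mul hkle (le_of_lt hl2') (le_of_lt hl2) hLL0
    _ = Real.log (Real.log n) := mul_one _
  have hB : ((2:ℝ) ^ (2 ^ k)) ≤ Real.exp (Real.log n) := by
    have he : ((2:ℝ) ^ (2^k : ℕ)) = Real.exp (((2:ℝ)^k) * Real.log 2) := by
      rw [← Real.exp_log (two_pos (α := ℝ)), ← Real.exp_nat_mul, Real.exp_log two_pos]
      congr 1
      push_cast
      ring
    rw [he]
    apply Real.exp_le_exp.mpr
    calc ((2:ℝ)^k) * Real.log 2 ≤ Real.log n * 1 :=
      mul_le_mul h2k (le_of_lt hl2') (le_of_lt hl2) (le_of_lt hL0)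
    _ = Real.log n := mul_one _
  -- product bound
  have hprod : ((n:ℝ) + 1) ^ k * 2 ^ (2 ^ k) ≤
      Real.exp (Real.log (Real.log n) * Real.log ((n:ℝ)+1) + Real.log n) := by
    rw [Real.exp_add]
    apply mul_le_mul hA hB (by positivity) (le_of_lt (Real.exp_pos _))
  -- exponent bound
  have hLLle : Real.log (Real.log n) ≤ Real.log ((n:ℝ)+1) := by
    calc Real.log (Real.log n) ≤ Real.log n := Real.log_le_self (by linarith)
    _ ≤ Real.log ((n:ℝ)+1) := Real.log_le_log (by linarith) (by linarith)
  have hlogn1 : Real.log ((n:ℝ)+1) ≤ 2 * Real.log n := by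
    have h1 : ((n:ℝ)+1) ≤ (n:ℝ)^2 := by nlinarith
    calc Real.log ((n:ℝ)+1) ≤ Real.log ((n:ℝ)^2) := Real.log_le_log hn1 h1
    _ = 2 * Real.log n := by rw [Real.log_pow]; norm_num
  have hexp : Real.log (Real.log n) * Real.log ((n:ℝ)+1) + Real.log n ≤
      δ * Real.log 2 * n := by
    have h1 : Real.log (Real.log n) * Real.log ((n:ℝ)+1) ≤ Real.log ((n:ℝ)+1) ^ 2 := by
      rw [sq]
      apply mul_le_mul_of_nonneg_right hLLle (by linarith)
    have hln : Real.log n ≤ Real.log ((n:ℝ)+1) := Real.log_le_log (by linarith) (by linarith)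
    have h2 : Real.log n ≤ Real.log ((n:ℝ)+1)^2 := by nlinarith
    have h3 : Real.log ((n:ℝ)+1)^2 ≤ 4 * Real.log n ^ 2 := by nlinarith
    have h4 : Real.log n ^ 2 < ε * n := by
      rw [div_lt_iff₀ hn0] at hsmall
      linarith
    rw [hε] at h4
    nlinarith
  calc ((n:ℝ) + 1) ^ k * 2 ^ (2 ^ k)
      ≤ Real.exp (Real.log (Real.log n) * Real.log ((n:ℝ)+1) + Real.log n) := hprod
    _ ≤ Real.exp (δ * Real.log 2 * n) := Real.exp_le_exp.mpr hexp
    _ = (2:ℝ) ^ (δ * n) := by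
        rw [Real.rpow_def_of_pos two_pos]
        ring_nf

end Aux

/-- The number of degenerate non-trivial hyperplanes of `ℝ^n` is `2^(o(n))`. -/
theorem card_degenerate_nontrivial_hyperplanes :
    ∀ δ > (0 : ℝ), ∃ N : ℕ, ∀ n ≥ N,
      {V : Submodule ℝ (EuclideanSpace ℝ (Fin n)) |
          IsNonTrivialHyperplane n V ∧ IsDegenerateHyperplane n V}.Finite ∧
        (Nat.card {V : Submodule ℝ (EuclideanSpace ℝ (Fin n)) //
            IsNonTrivialHyperplane n V ∧ IsDegenerateHyperplane n V} : ℝ) ≤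
          (2 : ℝ) ^ (δ * n) := by
  intro δ hδ
  obtain ⟨N, hN⟩ := Filter.eventually_atTop.mp (aux_count_bound δ hδ)
  refine ⟨N, fun n hn => ?_⟩
  classical
  set k := ⌊Real.log (Real.log n)⌋₊ with hkdef
  -- choose normal vectors
  have hv : ∀ V : {V : Submodule ℝ (EuclideanSpace ℝ (Fin n)) //
      IsNonTrivialHyperplane n V ∧ IsDegenerateHyperplane n V},
      ∃ v : EuclideanSpace ℝ (Fin n), v ≠ 0 ∧ v ∈ (V.1)ᗮ ∧
        (Nat.card {i : Fin n // v i ≠ 0} : ℝ) ≤ Real.log (Real.log n) :=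
    fun V => V.2.2
  choose v hv0 hvm hvc using hv
  set T : {V : Submodule ℝ (EuclideanSpace ℝ (Fin n)) //
      IsNonTrivialHyperplane n V ∧ IsDegenerateHyperplane n V} → Finset (Fin n) :=
    fun V => Finset.univ.filter (fun i => v V i ≠ 0) with hTdef
  have hT : ∀ V i, i ∈ T V ↔ v V i ≠ 0 := by
    intro V i; simp [hTdef]
  have hTcard : ∀ V, (T V).card ≤ k := by
    intro V
    apply Nat.le_floor
    have : Nat.card {i : Fin n // v V i ≠ 0} = (T V).card := by
      rw [Nat.card_eq_fintype_card, hTdef]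
      exact Fintype.card_subtype _
    rw [← this]
    exact hvc V
  -- embeddings into Fin k
  set e : ∀ V, {i // i ∈ T V} ↪ Fin k :=
    fun V => ((T V).equivFin.toEmbedding.trans (Fin.castLEEmb (hTcard V)))
    with hedef
  set Φ : {V : Submodule ℝ (EuclideanSpace ℝ (Fin n)) //
      IsNonTrivialHyperplane n V ∧ IsDegenerateHyperplane n V} →
      (Fin k → Option (Fin n)) × ((Fin k → Bool) → Bool) :=
    fun V => hypEncode (T V) (e V) V.1 with hΦdef
  have hΦinj : Function.Injective Φ := by
    intro V W h
    apply Subtype.ext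
    exact hypEncode_inj V.2.1.2 W.2.1.2
      (aux_mem_iff_sum V.2.1.1 (hv0 V) (hvm V))
      (aux_mem_iff_sum W.2.1.1 (hv0 W) (hvm W))
      (hT V) (hT W) (e V) (e W) h
  haveI hfin : Finite {V : Submodule ℝ (EuclideanSpace ℝ (Fin n)) //
      IsNonTrivialHyperplane n V ∧ IsDegenerateHyperplane n V} :=
    Finite.of_injective Φ hΦinj
  constructor
  · exact Set.finite_coe_iff.mp hfin
  · have hcard : Nat.card {V : Submodule ℝ (EuclideanSpace ℝ (Fin n)) //
        IsNonTrivialHyperplane n V ∧ IsDegenerateHyperplane n V} ≤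
        Nat.card ((Fin k → Option (Fin n)) × ((Fin k → Bool) → Bool)) :=
      Nat.card_le_card_of_injective Φ hΦinj
    have htarget : Nat.card ((Fin k → Option (Fin n)) × ((Fin k → Bool) → Bool)) =
        (n + 1) ^ k * 2 ^ (2 ^ k) := by
      simp [Nat.card_eq_fintype_card, Fintype.card_fun]
    rw [htarget] at hcard
    calc (Nat.card {V : Submodule ℝ (EuclideanSpace ℝ (Fin n)) //
            IsNonTrivialHyperplane n V ∧ IsDegenerateHyperplane n V} : ℝ)
        ≤ ((n + 1) ^ k * 2 ^ (2 ^ k) : ℕ) := by exact_mod_cast hcard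
      _ = ((n + 1 : ℝ) ^ k * 2 ^ (2 ^ k) : ℝ) := by push_cast; ring
      _ ≤ (2 : ℝ) ^ (δ * n) := hN n hn
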